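/- arXiv:1001.1237 — 2 statements merged into one kernel-verified Lean document; each statement's English description precedes it below -/
import Mathlib

section
/- Let V be a g-dimensional complex vector space, g ≥ 3, with basis x_1,…,x_g, and let x_{g+1},…,x_{2g} be additional vectors such that every g of the 2g vectors x_1,…,x_{2g} are linearly independent. Then the collection { x_{i_1} ∧ ⋯ ∧ x_{i_{g-2}} : {i_1,…,i_{g-2}} ⊆ {1,…,2g} of size g−2 } spans ⋀^{g-2} V. -/
open ExteriorAlgebra

/-- If `x_1, …, x_{2g}` are vectors in general position (any `g` linearly independent)
in a `g`-dimensional complex vector space `V`, `g ≥ 3`, then the wedge products of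
`(g-2)`-element subsets of them span `⋀^{g-2} V`. -/
theorem wedges_of_general_position_span (g : ℕ) (hg : 3 ≤ g)
    (V : Type) [AddCommGroup V] [Module ℂ V] [FiniteDimensional ℂ V]
    (hdim : Module.finrank ℂ V = g)
    (x : Fin (2 * g) → V)
    (hgen : ∀ s : Finset (Fin (2 * g)), s.card = g →
      LinearIndependent ℂ (fun i : s => x i)) :
    Submodule.span ℂ
      {w : ExteriorAlgebra ℂ V | ∃ f : Fin (g - 2) → Fin (2 * g),
        StrictMono f ∧ w = ExteriorAlgebra.ιMulti ℂ (g - 2) (x ∘ f)} =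
    (⋀[ℂ]^(g - 2) V : Submodule ℂ (ExteriorAlgebra ℂ V)) := by
  set n := g - 2 with hn
  have hle : g ≤ 2 * g := by omega
  set S : Submodule ℂ (ExteriorAlgebra ℂ V) := Submodule.span ℂ
      {w : ExteriorAlgebra ℂ V | ∃ f : Fin n → Fin (2 * g),
        StrictMono f ∧ w = ExteriorAlgebra.ιMulti ℂ n (x ∘ f)} with hS
  -- the first g vectors form a basis
  have hgpos : 0 < g := by omega
  haveI : Nonempty (Fin g) := ⟨⟨0, hgpos⟩⟩
  have hli : LinearIndependent ℂ (fun i : Fin g => x (Fin.castLE hle i)) := by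
    set s : Finset (Fin (2 * g)) :=
      (Finset.univ : Finset (Fin g)).map (Fin.castLEEmb hle) with hs
    have hcard : s.card = g := by simp [hs]
    have h := hgen s hcard
    have he : Function.Injective (fun i : Fin g =>
        (⟨Fin.castLE hle i, by simp [hs]⟩ : s)) := by
      intro a b hab
      have : (Fin.castLE hle a : Fin (2 * g)) = Fin.castLE hle b := by
        simpa using congrArg Subtype.val hab
      exact Fin.castLE_injective hle this
    exact h.comp _ he
  have hcardeq : Fintype.card (Fin g) = Module.finrank ℂ V := by simp [hdim]
  set b : Module.Basis (Fin g) ℂ V := basisOfLinearIndependentOfCardEqFinrank hli hcardeq with hb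
  have hbcoe : ∀ i : Fin g, b i = x (Fin.castLE hle i) := fun i => by
    rw [hb, coe_basisOfLinearIndependentOfCardEqFinrank]
  -- key: the wedge of any tuple of the x's lies in S
  have key : ∀ u : Fin n → Fin (2 * g), ExteriorAlgebra.ιMulti ℂ n (x ∘ u) ∈ S := by
    intro u
    by_cases hu : Function.Injective u
    · set σ := Tuple.sort u with hσ
      have hmono : Monotone (u ∘ σ) := Tuple.monotone_sort u
      have hsm : StrictMono (u ∘ σ) :=
        hmono.strictMono_of_injective (hu.comp σ.injective)
      have hcomp : (x ∘ (u ∘ σ)) ∘ (σ.symm : Equiv.Perm (Fin n)) = x ∘ u := by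
        funext i; simp [Function.comp]
      have h1 := (ExteriorAlgebra.ιMulti ℂ n (M := V)).map_perm (x ∘ (u ∘ σ)) σ.symm
      rw [hcomp] at h1
      have hmem : ExteriorAlgebra.ιMulti ℂ n (x ∘ (u ∘ σ)) ∈ S := by
        apply Submodule.subset_span
        exact ⟨u ∘ σ, hsm, rfl⟩
      rw [h1, Units.smul_def]
      exact zsmul_mem hmem _
    · have hxu : ¬ Function.Injective (x ∘ u) := by
        intro hinj
        exact hu fun a b hab => hinj (by simp [Function.comp, hab])
      rw [AlternatingMap.map_eq_zero_of_not_injective _ _ hxu]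
      exact S.zero_mem
  apply le_antisymm
  · rw [Submodule.span_le]
    rintro w ⟨f, hf, rfl⟩
    exact ExteriorAlgebra.ιMulti_range ℂ n ⟨x ∘ f, rfl⟩
  · rw [← ExteriorAlgebra.ιMulti_span_fixedDegree, Submodule.span_le]
    rintro w ⟨v, rfl⟩
    have hv : v = fun i => ∑ j : Fin g, b.repr (v i) j • b j := by
      funext i; rw [b.sum_repr (v i)]
    have expand :
        ExteriorAlgebra.ιMulti ℂ n v =
          ∑ r : Fin n → Fin g,
            (∏ i, b.repr (v i) (r i)) • ExteriorAlgebra.ιMulti ℂ n (fun i => b (r i)) := by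
      conv_lhs => rw [hv]
      rw [show (ExteriorAlgebra.ιMulti ℂ n (M := V))
            (fun i => ∑ j : Fin g, b.repr (v i) j • b j) =
          (ExteriorAlgebra.ιMulti ℂ n (M := V)).toMultilinearMap
            (fun i => ∑ j : Fin g, b.repr (v i) j • b j) from rfl]
      rw [MultilinearMap.map_sum]
      refine Finset.sum_congr rfl fun r _ => ?_
      exact MultilinearMap.map_smul_univ _ (fun i => b.repr (v i) (r i)) (fun i => b (r i))
    rw [expand]
    refine Submodule.sum_mem S fun r _ => Submodule.smul_mem S _ ?_
    have : (fun i => b (r i)) = x ∘ (fun i => Fin.castLE hle (r i)) := by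
      funext i; simp [hbcoe, Function.comp]
    rw [this]
    exact key _
end

section
/- Let W be a 3-dimensional complex vector space and let (L_1, L_1'), …, (L_6, L_6') be six pairs of nonzero linear forms on W such that the six singular points p_i of the conics {L_i L_i' = 0} (i.e., the intersection points of the lines L_i = 0 and L_i' = 0) lie on a smooth conic but are otherwise generic. Then the six quadratic forms L_i L_i' ∈ Sym²(W*) span a subspace of dimension at least 3; in particular no three of the forms L_i L_i' can be pairwise non-proportional and collinear in ℙ Sym²(W*) if their singular points are distinct points of a smooth conic in general position. -/
open Module Submodule QuadraticMap

lemma aux_dep {W : Type} [AddCommGroup W] [Module ℂ W] [FiniteDimensional ℂ W]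
    (hW : Module.finrank ℂ W = 3) (f g : W →ₗ[ℂ] ℂ) (u v : W)
    (huv : LinearIndependent ℂ ![u, v]) (hfu : f u = 0) (hfv : f v = 0)
    (hgu : g u = 0) (hgv : g v = 0) : ¬ LinearIndependent ℂ ![f, g] := by
  intro hfg
  have hlt : Submodule.span ℂ (Set.range ![u, v]) < ⊤ := by
    rw [lt_top_iff_ne_top]
    intro htop
    have h2 : Module.finrank ℂ (Submodule.span ℂ (Set.range ![u, v])) = 2 := by
      rw [finrank_span_eq_card huv]; simp
    rw [htop, finrank_top, hW] at h2
    exact (by norm_num : (3:ℕ) ≠ 2) h2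
  obtain ⟨w, -, hwnot⟩ := SetLike.exists_of_lt hlt
  have hsnoc : (![u, v, w] : Fin 3 → W) = Fin.snoc ![u, v] w := by
    funext i; fin_cases i <;> rfl
  have hind3 : LinearIndependent ℂ ![u, v, w] := by
    rw [hsnoc, linearIndependent_fin_snoc]
    exact ⟨huv, hwnot⟩
  let b : Basis (Fin 3) ℂ W := basisOfLinearIndependentOfCardEqFinrank hind3 (by simp [hW])
  have hb : ⇑b = ![u, v, w] := coe_basisOfLinearIndependentOfCardEqFinrank hind3 _
  have hcomb : (g w) • f + (-(f w)) • g = 0 := by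
    apply b.ext
    intro i
    have := congrFun hb i
    fin_cases i <;>
      simp_all [LinearMap.add_apply, LinearMap.smul_apply, hfu, hfv, hgu, hgv] <;> ring
  have := hfg.eq_zero_of_pair hcomb
  have hfw : f w = 0 := by simpa using this.2
  have hgw : g w = 0 := this.1
  have hf0 : f = 0 := by
    apply b.ext; intro i
    have := congrFun hb i
    fin_cases i <;> simp_all
  exact hfg.ne_zero 0 (by simpa using hf0)

/-- Let `W ≅ ℂ³` and let `(L_i, L_i')`, `i = 1,…,6`, be pairs of independent linear forms
on `W`, so each conic `{L_i L_i' = 0}` is a pair of lines with unique singular point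
`p_i`.  If the `p_i` are pairwise distinct (projectively) and lie on a smooth conic, then
the six quadratic forms `L_i L_i'` span a subspace of `Sym²(W*)` of dimension at least
`3`. -/
theorem line_pair_quadrics_span (W : Type) [AddCommGroup W] [Module ℂ W]
    [FiniteDimensional ℂ W] (hW : Module.finrank ℂ W = 3)
    (L L' : Fin 6 → W →ₗ[ℂ] ℂ)
    (hind : ∀ i, LinearIndependent ℂ ![L i, L' i])
    (p : Fin 6 → W) (hp0 : ∀ i, p i ≠ 0)
    (hsing : ∀ i, L i (p i) = 0 ∧ L' i (p i) = 0)
    (hdist : ∀ i j, i ≠ j → ∀ c : ℂ, p j ≠ c • p i)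
    (q : QuadraticForm ℂ W) (hconic : ∀ i, q (p i) = 0)
    (hsmooth : (QuadraticMap.polarBilin q).Nondegenerate) :
    3 ≤ Module.finrank ℂ
      ↥(Submodule.span ℂ
        (Set.range fun i => QuadraticMap.linMulLin (L i) (L' i))) := by
  classical
  set Q : Fin 6 → QuadraticForm ℂ W := fun i => QuadraticMap.linMulLin (L i) (L' i) with hQdef
  -- polar of Q i
  have hpolar : ∀ (i : Fin 6) (x y : W),
      polar (Q i) x y = L i x * L' i y + L i y * L' i x := by
    intro i x y
    simp only [polar, hQdef, linMulLin_apply, map_add]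
    ring
  -- polar of Q i at its singular point
  have hQpp : ∀ (i : Fin 6) (y : W), polar (Q i) (p i) y = 0 := by
    intro i y
    rw [hpolar]
    rw [(hsing i).1, (hsing i).2]
    ring
  -- radical lemma
  have hrad : ∀ (i : Fin 6) (x : W), (∀ y, polar (Q i) x y = 0) → ∃ c : ℂ, x = c • p i := by
    intro i x hx
    have hfun : (L' i x) • (L i) + (L i x) • (L' i) = 0 := by
      ext y
      have := hx y
      rw [hpolar] at this
      simp only [LinearMap.add_apply, LinearMap.smul_apply, smul_eq_mul, LinearMap.zero_apply]
      linear_combination this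
    have hz := (hind i).eq_zero_of_pair hfun
    by_contra hc
    push_neg at hc
    have hx0 : x ≠ 0 := by
      intro h; exact hc 0 (by simp [h])
    have hpi : LinearIndependent ℂ ![p i, x] := by
      rw [linearIndependent_fin2]
      constructor
      · simpa using hx0
      · intro a ha
        simp only [Matrix.cons_val_one, Matrix.head_cons, Matrix.cons_val_zero] at ha
        by_cases ha0 : a = 0
        · exact hp0 i (by simp [ha0] at ha; exact ha.symm)
        · exact hc a⁻¹ (by rw [← ha, smul_smul, inv_mul_cancel₀ ha0, one_smul])
    exact aux_dep hW (L i) (L' i) (p i) x hpi (hsing i).1 hz.2 (hsing i).2 hz.1 (hind i)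
  -- no Q i vanishes
  have hQne : ∀ i : Fin 6, Q i ≠ 0 := by
    intro i h0
    have hLne : (L i) ≠ 0 := (hind i).ne_zero 0
    have hL'ne : (L' i) ≠ 0 := by
      have := (hind i).ne_zero 1; simpa using this
    obtain ⟨u, hu⟩ := DFunLike.ne_iff.mp hLne
    obtain ⟨v, hv⟩ := DFunLike.ne_iff.mp hL'ne
    simp only [LinearMap.zero_apply] at hu hv
    have key : ∃ z : W, L i z ≠ 0 ∧ L' i z ≠ 0 := by
      by_cases h1 : L' i u ≠ 0
      · exact ⟨u, hu, h1⟩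
      by_cases h2 : L i v ≠ 0
      · exact ⟨v, h2, hv⟩
      push_neg at h1 h2
      exact ⟨u + v, by simp [h2, hu], by simp [h1, hv]⟩
    obtain ⟨z, hz1, hz2⟩ := key
    have : Q i z = 0 := by rw [h0]; rfl
    rw [hQdef] at this
    simp only [linMulLin_apply] at this
    exact (mul_ne_zero hz1 hz2) this
  -- proportionality of singular points
  have hprop : ∀ (k j : Fin 6), k ≠ j → ¬ (∀ y, polar (Q k) (p j) y = 0) := by
    intro k j hkj hzero
    obtain ⟨c, hc⟩ := hrad k (p j) hzero
    exact hdist k j hkj c hc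
  -- ===== main contradiction argument =====
  by_contra hcon
  push_neg at hcon
  -- polar linearity helper
  have hpadd : ∀ (s t : ℂ) (i : Fin 6), s • Q 0 + t • Q 1 = Q i →
      ∀ x u, s * polar (⇑(Q 0)) x u + t * polar (⇑(Q 1)) x u = polar (⇑(Q i)) x u := by
    intro s t i heq x u
    rw [← heq]
    simp only [polar, QuadraticMap.add_apply, QuadraticMap.smul_apply, smul_eq_mul]
    ring
  -- Q 0 and Q 1 are linearly independent
  have hQ01 : LinearIndependent ℂ ![Q 0, Q 1] := by
    rw [LinearIndependent.pair_iff]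
    intro s t hst
    have hkey : ∀ u, t * polar (⇑(Q 1)) (p 0) u = 0 := by
      intro u
      have h := congrArg (fun A : QuadraticForm ℂ W => polar (⇑A) (p 0) u) hst
      have hL : polar (⇑(s • Q 0 + t • Q 1)) (p 0) u
          = s * polar (⇑(Q 0)) (p 0) u + t * polar (⇑(Q 1)) (p 0) u := by
        simp only [polar, QuadraticMap.add_apply, QuadraticMap.smul_apply, smul_eq_mul]
        ring
      have hR : polar (⇑(0 : QuadraticForm ℂ W)) (p 0) u = 0 := by
        simp [polar]
      rw [hL, hR, hQpp 0] at h
      linear_combination h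
    have ht : t = 0 := by
      by_contra ht
      exact hprop 1 0 (by decide) (fun y =>
        (mul_eq_zero.mp (hkey y)).resolve_left ht)
    subst ht
    have hs : s = 0 := by
      by_contra hs
      apply hQne 0
      have h0 : s • Q 0 = 0 := by simpa using hst
      calc Q 0 = s⁻¹ • (s • Q 0) := by rw [smul_smul, inv_mul_cancel₀ hs, one_smul]
        _ = 0 := by rw [h0, smul_zero]
    exact ⟨hs, rfl⟩
  -- the span equals the span of Q 0, Q 1
  haveI hfinS : FiniteDimensional ℂ (Submodule.span ℂ (Set.range Q)) :=
    FiniteDimensional.span_of_finite ℂ (Set.finite_range Q)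
  have hTle : Submodule.span ℂ (Set.range ![Q 0, Q 1]) ≤ Submodule.span ℂ (Set.range Q) := by
    rw [Submodule.span_le]
    rintro x ⟨i, rfl⟩
    fin_cases i
    · exact Submodule.subset_span ⟨0, rfl⟩
    · exact Submodule.subset_span ⟨1, rfl⟩
  have hTfin : Module.finrank ℂ (Submodule.span ℂ (Set.range ![Q 0, Q 1])) = 2 := by
    rw [finrank_span_eq_card hQ01]; simp
  have hST : Submodule.span ℂ (Set.range ![Q 0, Q 1]) = Submodule.span ℂ (Set.range Q) := by
    have h2' : Module.finrank ℂ (Submodule.span ℂ (Set.range Q)) ≤ 2 := Nat.lt_succ_iff.mp hcon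
    exact Submodule.eq_of_le_of_finrank_le hTle (hTfin ▸ h2')
  have hrange : Set.range ![Q 0, Q 1] = {Q 0, Q 1} := by
    simp only [Matrix.range_cons, Matrix.range_empty, Set.union_empty, Set.union_singleton]
    exact Set.pair_comm _ _
  have hmem : ∀ i : Fin 6, ∃ s t : ℂ, s • Q 0 + t • Q 1 = Q i := by
    intro i
    have h1 : Q i ∈ Submodule.span ℂ (Set.range Q) := Submodule.subset_span ⟨i, rfl⟩
    rw [← hST, hrange] at h1
    exact Submodule.mem_span_pair.mp h1
  -- coefficients are nonzero
  have hcoeff : ∀ (i : Fin 6) (s t : ℂ), i ≠ 0 → i ≠ 1 → s • Q 0 + t • Q 1 = Q i →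
      s ≠ 0 ∧ t ≠ 0 := by
    intro i s t hi0 hi1 heq
    have hE := hpadd s t i heq (p i)
    constructor
    · intro hs
      subst hs
      have ht : t ≠ 0 := by
        intro ht; subst ht
        apply hQne i
        rw [← heq]; simp
      apply hprop 1 i (Ne.symm hi1)
      intro y
      have := hE y
      rw [hQpp i y] at this
      have h2 : t * polar (⇑(Q 1)) (p i) y = 0 := by linear_combination this
      exact (mul_eq_zero.mp h2).resolve_left ht
    · intro ht
      subst ht
      have hs : s ≠ 0 := by
        intro hs; subst hs
        apply hQne i
        rw [← heq]; simp
      apply hprop 0 i (Ne.symm hi0)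
      intro y
      have := hE y
      rw [hQpp i y] at this
      have h2 : s * polar (⇑(Q 0)) (p i) y = 0 := by linear_combination this
      exact (mul_eq_zero.mp h2).resolve_left hs
  -- build a basis p 0, p 1, w
  have hp01 : LinearIndependent ℂ ![p 0, p 1] := by
    rw [linearIndependent_fin2]
    refine ⟨by simpa using hp0 1, fun a ha => ?_⟩
    simp only [Matrix.cons_val_one, Matrix.head_cons, Matrix.cons_val_zero] at ha
    exact hdist 1 0 (by decide) a ha.symm
  have hlt : Submodule.span ℂ (Set.range ![p 0, p 1]) < ⊤ := by
    rw [lt_top_iff_ne_top]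
    intro htop
    have h2 : Module.finrank ℂ (Submodule.span ℂ (Set.range ![p 0, p 1])) = 2 := by
      rw [finrank_span_eq_card hp01]; simp
    rw [htop, finrank_top, hW] at h2
    exact (by norm_num : (3:ℕ) ≠ 2) h2
  obtain ⟨w, -, hwnot⟩ := SetLike.exists_of_lt hlt
  have hsnoc : (![p 0, p 1, w] : Fin 3 → W) = Fin.snoc ![p 0, p 1] w := by
    funext i; fin_cases i <;> rfl
  have hind3 : LinearIndependent ℂ ![p 0, p 1, w] := by
    rw [hsnoc, linearIndependent_fin_snoc]
    exact ⟨hp01, hwnot⟩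
  let b : Basis (Fin 3) ℂ W := basisOfLinearIndependentOfCardEqFinrank hind3 (by simp [hW])
  have hb : ⇑b = ![p 0, p 1, w] := coe_basisOfLinearIndependentOfCardEqFinrank hind3 _
  have hb0 : b 0 = p 0 := by rw [show b 0 = (⇑b) 0 from rfl, hb]; rfl
  have hb1 : b 1 = p 1 := by rw [show b 1 = (⇑b) 1 from rfl, hb]; rfl
  have hb2 : b 2 = w := by rw [show b 2 = (⇑b) 2 from rfl, hb]; rfl
  -- a functional-type lemma: polar (Q i) x vanishing on the basis vanishes everywhere
  have hfun : ∀ (i : Fin 6) (x : W), polar (⇑(Q i)) x (p 0) = 0 → polar (⇑(Q i)) x (p 1) = 0 →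
      polar (⇑(Q i)) x w = 0 → ∀ y, polar (⇑(Q i)) x y = 0 := by
    intro i x h0 h1 h2 y
    rw [hpolar] at h0 h1 h2 ⊢
    have hpsi : (L' i x) • (L i) + (L i x) • (L' i) = 0 := by
      apply b.ext
      intro j
      fin_cases j <;>
        simp only [Fin.zero_eta, Fin.mk_one, show (⟨2, by omega⟩ : Fin 3) = 2 from rfl,
          Fin.isValue, hb0, hb1, hb2, LinearMap.add_apply, LinearMap.smul_apply, smul_eq_mul,
          LinearMap.zero_apply]
      · linear_combination h0
      · linear_combination h1
      · linear_combination h2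
    have := DFunLike.congr_fun hpsi y
    simp only [LinearMap.add_apply, LinearMap.smul_apply, smul_eq_mul,
      LinearMap.zero_apply] at this
    linear_combination this
  -- symmetric vanishing facts
  have v00 : ∀ u : W, polar (⇑(Q 0)) (p 0) u = 0 := hQpp 0
  have v00' : ∀ u : W, polar (⇑(Q 0)) u (p 0) = 0 := fun u =>
    (polar_comm (⇑(Q 0)) u (p 0)).trans (v00 u)
  have v11 : ∀ u : W, polar (⇑(Q 1)) (p 1) u = 0 := hQpp 1
  have v11' : ∀ u : W, polar (⇑(Q 1)) u (p 1) = 0 := fun u =>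
    (polar_comm (⇑(Q 1)) u (p 1)).trans (v11 u)
  -- the six matrix entries
  set a : ℂ := polar (⇑(Q 0)) (p 1) (p 1) with ha_def
  set bb : ℂ := polar (⇑(Q 0)) (p 1) w with hbb_def
  set cc : ℂ := polar (⇑(Q 0)) w w with hcc_def
  set d : ℂ := polar (⇑(Q 1)) (p 0) (p 0) with hd_def
  set e : ℂ := polar (⇑(Q 1)) (p 0) w with he_def
  set f : ℂ := polar (⇑(Q 1)) w w with hf_def
  have hcomm0 : polar (⇑(Q 0)) w (p 1) = bb := polar_comm (⇑(Q 0)) w (p 1)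
  have hcomm1 : polar (⇑(Q 1)) w (p 0) = e := polar_comm (⇑(Q 1)) w (p 0)
  -- rank facts
  have hbbne : a = 0 → bb ≠ 0 := by
    intro ha h0
    apply hprop 0 1 (by decide)
    apply hfun 0 (p 1) (v00' (p 1))
    · rw [← ha_def, ha]
    · rw [← hbb_def, h0]
  have hene : d = 0 → e ≠ 0 := by
    intro hd h0
    apply hprop 1 0 (by decide)
    apply hfun 1 (p 0) ?_ (v11' (p 0))
    · rw [← he_def, h0]
    · rw [← hd_def, hd]
  -- expansion helper
  have hexp : ∀ (i : Fin 6) (x y z : ℂ) (u : W),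
      polar (⇑(Q i)) (x • p 0 + y • p 1 + z • w) u
        = x * polar (⇑(Q i)) (p 0) u + y * polar (⇑(Q i)) (p 1) u + z * polar (⇑(Q i)) w u := by
    intro i x y z u
    rw [polar_add_left, polar_add_left, polar_smul_left, polar_smul_left, polar_smul_left]
    simp only [smul_eq_mul]
  have hacb : a ≠ 0 → a * cc - bb * bb ≠ 0 := by
    intro ha h0
    have hv : ∀ y, polar (⇑(Q 0)) (bb • p 1 + (-a) • w) y = 0 := by
      apply hfun 0
      · rw [polar_add_left, polar_smul_left, polar_smul_left, v00' (p 1), v00' w]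
        simp
      · rw [polar_add_left, polar_smul_left, polar_smul_left, ← ha_def,
          polar_comm (⇑(Q 0)) w (p 1), ← hbb_def]
        simp only [smul_eq_mul]
        ring
      · rw [polar_add_left, polar_smul_left, polar_smul_left, ← hbb_def, ← hcc_def]
        simp only [smul_eq_mul]
        linear_combination -h0
    obtain ⟨c, hc⟩ := hrad 0 _ hv
    have hsum : ∑ j : Fin 3, (![-c, bb, -a] j) • (![p 0, p 1, w] j) = 0 := by
      rw [Fin.sum_univ_three]
      simp only [Matrix.cons_val_zero, Matrix.cons_val_one, Matrix.head_cons,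
        Matrix.cons_val_two, Matrix.tail_cons]
      rw [neg_smul, neg_smul]
      rw [eq_comm, ← sub_eq_zero] at hc
      linear_combination (norm := module) -hc
    have := Fintype.linearIndependent_iff.mp hind3 _ hsum 2
    simp only [Matrix.cons_val_two, Matrix.tail_cons, Matrix.cons_val_one,
      Matrix.head_cons, neg_eq_zero] at this
    exact ha this
  have hdfe : d ≠ 0 → d * f - e * e ≠ 0 := by
    intro hd h0
    have hv : ∀ y, polar (⇑(Q 1)) (e • p 0 + (-d) • w) y = 0 := by
      apply hfun 1
      · rw [polar_add_left, polar_smul_left, polar_smul_left, ← hd_def,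
          polar_comm (⇑(Q 1)) w (p 0), ← he_def]
        simp only [smul_eq_mul]
        ring
      · rw [polar_add_left, polar_smul_left, polar_smul_left, v11' (p 0), v11' w]
        simp
      · rw [polar_add_left, polar_smul_left, polar_smul_left, ← he_def, ← hf_def]
        simp only [smul_eq_mul]
        linear_combination -h0
    obtain ⟨c, hc⟩ := hrad 1 _ hv
    have hsum : ∑ j : Fin 3, (![e, -c, -d] j) • (![p 0, p 1, w] j) = 0 := by
      rw [Fin.sum_univ_three]
      simp only [Matrix.cons_val_zero, Matrix.cons_val_one, Matrix.head_cons,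
        Matrix.cons_val_two, Matrix.tail_cons]
      rw [neg_smul, neg_smul]
      rw [eq_comm, ← sub_eq_zero] at hc
      linear_combination (norm := module) -hc
    have := Fintype.linearIndependent_iff.mp hind3 _ hsum 2
    simp only [Matrix.cons_val_two, Matrix.tail_cons, Matrix.cons_val_one,
      Matrix.head_cons, neg_eq_zero] at this
    exact hd this
  -- coordinates of p 2 and p 3
  have hcoord : ∀ i : Fin 6, ∃ x y z : ℂ, p i = x • p 0 + y • p 1 + z • w := by
    intro i
    refine ⟨b.repr (p i) 0, b.repr (p i) 1, b.repr (p i) 2, ?_⟩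
    have hsum := b.sum_repr (p i)
    rw [Fin.sum_univ_three, hb0, hb1, hb2] at hsum
    exact hsum.symm
  obtain ⟨x2, y2, z2, hp2⟩ := hcoord 2
  obtain ⟨x3, y3, z3, hp3⟩ := hcoord 3
  obtain ⟨s2, t2, hQ2⟩ := hmem 2
  obtain ⟨s3, t3, hQ3⟩ := hmem 3
  obtain ⟨hs2, ht2⟩ := hcoeff 2 s2 t2 (by decide) (by decide) hQ2
  obtain ⟨hs3, ht3⟩ := hcoeff 3 s3 t3 (by decide) (by decide) hQ3
  -- the three equations for each of i = 2, 3
  have hEgen : ∀ (i : Fin 6) (s t x y z : ℂ), s ≠ 0 → t ≠ 0 →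
      s • Q 0 + t • Q 1 = Q i → p i = x • p 0 + y • p 1 + z • w →
      (x * d + z * e = 0) ∧ (y * a + z * bb = 0) ∧
        (s * (y * bb + z * cc) + t * (x * e + z * f) = 0) := by
    intro i s t x y z hs ht heq hpi
    have hE := hpadd s t i heq (p i)
    have hE0 := hE (p 0)
    have hE1 := hE (p 1)
    have hEw := hE w
    rw [hQpp i] at hE0 hE1 hEw
    rw [hpi] at hE0 hE1 hEw
    simp only [hexp, v00, v00', v11, v11', hcomm0, hcomm1, ← ha_def, ← hbb_def, ← hcc_def,
      ← hd_def, ← he_def, ← hf_def] at hE0 hE1 hEw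
    refine ⟨?_, ?_, ?_⟩
    · have h' : t * (x * d + z * e) = 0 := by linear_combination hE0
      exact (mul_eq_zero.mp h').resolve_left ht
    · have h' : s * (y * a + z * bb) = 0 := by linear_combination hE1
      exact (mul_eq_zero.mp h').resolve_left hs
    · linear_combination hEw
  obtain ⟨hE1_2, hE2_2, hE3_2⟩ := hEgen 2 s2 t2 x2 y2 z2 hs2 ht2 hQ2 hp2
  obtain ⟨hE1_3, hE2_3, hE3_3⟩ := hEgen 3 s3 t3 x3 y3 z3 hs3 ht3 hQ3 hp3
  -- one of z2, z3 vanishes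
  have hz23 : z2 = 0 ∨ z3 = 0 := by
    by_cases ha : a = 0
    · left
      have h' : z2 * bb = 0 := by rw [ha] at hE2_2; linear_combination hE2_2
      exact (mul_eq_zero.mp h').resolve_right (hbbne ha)
    by_cases hd : d = 0
    · left
      have h' : z2 * e = 0 := by rw [hd] at hE1_2; linear_combination hE1_2
      exact (mul_eq_zero.mp h').resolve_right (hene hd)
    by_contra hcon2
    push_neg at hcon2
    obtain ⟨hz2, hz3⟩ := hcon2
    have hD0 : d * (a * cc - bb * bb) ≠ 0 := mul_ne_zero hd (hacb ha)
    have hD1 : a * (d * f - e * e) ≠ 0 := mul_ne_zero ha (hdfe hd)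
    have G2 : s2 * (d * (a * cc - bb * bb)) + t2 * (a * (d * f - e * e)) = 0 := by
      have key : (s2 * (d * (a * cc - bb * bb)) + t2 * (a * (d * f - e * e))) * z2 = 0 := by
        linear_combination (a * d) * hE3_2 - (s2 * d * bb) * hE2_2 - (t2 * a * e) * hE1_2
      exact (mul_eq_zero.mp key).resolve_right hz2
    have G3 : s3 * (d * (a * cc - bb * bb)) + t3 * (a * (d * f - e * e)) = 0 := by
      have key : (s3 * (d * (a * cc - bb * bb)) + t3 * (a * (d * f - e * e))) * z3 = 0 := by
        linear_combination (a * d) * hE3_3 - (s3 * d * bb) * hE2_3 - (t3 * a * e) * hE1_3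
      exact (mul_eq_zero.mp key).resolve_right hz3
    have hcross : s2 * t3 = s3 * t2 := by
      have h1 : (s2 * t3 - s3 * t2) * (a * (d * f - e * e)) = 0 := by
        linear_combination s2 * G3 - s3 * G2
      have h2 := (mul_eq_zero.mp h1).resolve_right hD1
      linear_combination h2
    have hQ32 : Q 3 = (s3 / s2) • Q 2 := by
      rw [← hQ3, ← hQ2, smul_add, smul_smul, smul_smul]
      congr 1
      · rw [div_mul_cancel₀ _ hs2]
      · congr 1
        field_simp
        linear_combination hcross
    apply hprop 2 3 (by decide)
    intro y
    have h0 := hQpp 3 y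
    rw [hQ32] at h0
    have h1 : (s3 / s2) * polar (⇑(Q 2)) (p 3) y = 0 := by
      rw [← h0]
      simp only [polar, QuadraticMap.smul_apply, smul_eq_mul]
      ring
    exact (mul_eq_zero.mp h1).resolve_left (div_ne_zero hs3 hs2)
  -- endgame: three of the p's lie in the plane spanned by p 0, p 1
  have endgame : ∀ (k : Fin 6), k ≠ 0 → k ≠ 1 → ∀ xk yk : ℂ,
      p k = xk • p 0 + yk • p 1 → False := by
    intro k hk0 hk1 xk yk hpk
    have hxk : xk ≠ 0 := by
      intro h
      rw [h, zero_smul, zero_add] at hpk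
      exact hdist 1 k (Ne.symm hk1) yk hpk
    have hyk : yk ≠ 0 := by
      intro h
      rw [h, zero_smul, add_zero] at hpk
      exact hdist 0 k (Ne.symm hk0) xk hpk
    -- polar q (p 0) (p 1) = 0
    have hq01 : polar (⇑q) (p 0) (p 1) = 0 := by
      have h1 : q (p k) = 0 := hconic k
      rw [hpk, QuadraticMap.map_add (⇑q) (xk • p 0) (yk • p 1)] at h1
      rw [QuadraticMap.map_smul, QuadraticMap.map_smul] at h1
      rw [polar_smul_left, polar_smul_right] at h1
      rw [hconic 0, hconic 1] at h1
      simp only [smul_eq_mul, mul_zero, zero_add, add_zero] at h1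
      have h2 : xk * yk * polar (⇑q) (p 0) (p 1) = 0 := by linear_combination h1
      rcases mul_eq_zero.mp h2 with h3 | h3
      · exact absurd h3 (mul_ne_zero hxk hyk)
      · exact h3
    have hq00 : polar (⇑q) (p 0) (p 0) = 0 := by
      rw [polar_self, hconic 0, smul_zero]
    have hq11 : polar (⇑q) (p 1) (p 1) = 0 := by
      rw [polar_self, hconic 1, smul_zero]
    set al : ℂ := polar (⇑q) (p 1) w with hal_def
    set be : ℂ := polar (⇑q) (p 0) w with hbe_def
    have hvzero : polarBilin q (al • p 0 + (-be) • p 1) = 0 := by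
      apply b.ext
      intro j
      fin_cases j <;>
        simp only [Fin.zero_eta, Fin.mk_one, show (⟨2, by omega⟩ : Fin 3) = 2 from rfl,
          Fin.isValue, hb0, hb1, hb2, LinearMap.zero_apply, polarBilin_apply_apply]
      · rw [polar_add_left, polar_smul_left, polar_smul_left, hq00,
          polar_comm (⇑q) (p 1) (p 0), hq01]
        simp
      · rw [polar_add_left, polar_smul_left, polar_smul_left, hq01, hq11]
        simp
      · rw [polar_add_left, polar_smul_left, polar_smul_left, ← hal_def, ← hbe_def]
        simp only [smul_eq_mul]
        ring
    have hv0 : al • p 0 + (-be) • p 1 = 0 := by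
      apply hsmooth.1
      intro y
      rw [hvzero]
      rfl
    have hsum : ∑ j : Fin 2, (![al, -be] j) • (![p 0, p 1] j) = 0 := by
      rw [Fin.sum_univ_two]
      simp only [Matrix.cons_val_zero, Matrix.cons_val_one, Matrix.head_cons]
      exact hv0
    have hcoef := Fintype.linearIndependent_iff.mp hp01 _ hsum
    have hal0 : al = 0 := by simpa using hcoef 0
    have hbe0 : be = 0 := by
      have := hcoef 1
      simp only [Matrix.cons_val_one, Matrix.head_cons, Matrix.cons_val_zero, neg_eq_zero] at this
      exact this
    have hp0zero : polarBilin q (p 0) = 0 := by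
      apply b.ext
      intro j
      fin_cases j <;>
        simp only [Fin.zero_eta, Fin.mk_one, show (⟨2, by omega⟩ : Fin 3) = 2 from rfl,
          Fin.isValue, hb0, hb1, hb2, LinearMap.zero_apply, polarBilin_apply_apply]
      · exact hq00
      · exact hq01
      · rw [← hbe_def]; exact hbe0
    apply hp0 0
    apply hsmooth.1
    intro y
    rw [hp0zero]
    rfl
  rcases hz23 with hz | hz
  · rw [hz, zero_smul, add_zero] at hp2
    exact endgame 2 (by decide) (by decide) x2 y2 hp2
  · rw [hz, zero_smul, add_zero] at hp3
    exact endgame 3 (by decide) (by decide) x3 y3 hp3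
end
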